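/- Let γ ∈ [1,∞), K > 0, and a, b ∈ ℝⁿ with |a| ≥ K. Then for every α ∈ [γ,∞) one has |a|^γ ≤ 2^γ |a-b|^γ + 2^{α-1} K^{γ-α} |b|^α. -/
import Mathlib

lemma aux_rpow_add {x y : ℝ} (p : ℝ) (hx : 0 ≤ x) (hy : 0 ≤ y) (hp : 1 ≤ p) :
    (x + y) ^ p ≤ 2 ^ (p - 1) * (x ^ p + y ^ p) := by
  have h := NNReal.rpow_add_le_mul_rpow_add_rpow x.toNNReal y.toNNReal hp
  have h2 := NNReal.coe_le_coe.2 h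
  push_cast at h2
  rwa [Real.coe_toNNReal _ hx, Real.coe_toNNReal _ hy] at h2

/-- Let γ ∈ [1,∞), K > 0, and a, b ∈ ℝⁿ with |a| ≥ K. Then for every α ∈ [γ,∞) one has
|a|^γ ≤ 2^γ |a-b|^γ + 2^{α-1} K^{γ-α} |b|^α. -/
theorem stmt0 (n : ℕ) (γ K α : ℝ) (hγ : 1 ≤ γ) (hK : 0 < K) (hα : γ ≤ α)
    (a b : EuclideanSpace ℝ (Fin n)) (ha : K ≤ ‖a‖) :
    ‖a‖ ^ γ ≤ 2 ^ γ * ‖a - b‖ ^ γ + 2 ^ (α - 1) * K ^ (γ - α) * ‖b‖ ^ α := by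
  have hbnn : 0 ≤ ‖b‖ := norm_nonneg b
  have habnn : 0 ≤ ‖a - b‖ := norm_nonneg _
  have hγ0 : 0 ≤ γ := by linarith
  by_cases hb : ‖b‖ < K / 2
  · -- then ‖a‖ ≤ 2 ‖a-b‖
    have h1 : ‖a‖ ≤ 2 * ‖a - b‖ := by
      have h := norm_sub_norm_le a b
      nlinarith
    have h2 : ‖a‖ ^ γ ≤ (2 * ‖a - b‖) ^ γ :=
      Real.rpow_le_rpow (norm_nonneg a) h1 hγ0
    rw [Real.mul_rpow (by norm_num) habnn] at h2
    have hnn : 0 ≤ 2 ^ (α - 1) * K ^ (γ - α) * ‖b‖ ^ α := by positivity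
    linarith
  · push_neg at hb
    have hb0 : 0 < ‖b‖ := lt_of_lt_of_le (by linarith) hb
    have tri : ‖a‖ ≤ ‖a - b‖ + ‖b‖ := by
      calc ‖a‖ = ‖(a - b) + b‖ := by rw [sub_add_cancel]
      _ ≤ ‖a - b‖ + ‖b‖ := norm_add_le _ _
    have step1 : ‖a‖ ^ γ ≤ 2 ^ (γ - 1) * (‖a - b‖ ^ γ + ‖b‖ ^ γ) :=
      le_trans (Real.rpow_le_rpow (norm_nonneg a) tri hγ0)
        (aux_rpow_add γ habnn hbnn hγ)
    have hpow2 : (2:ℝ) ^ (γ - 1) ≤ 2 ^ γ :=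
      Real.rpow_le_rpow_of_exponent_le one_le_two (by linarith)
    -- key: 2^{γ-1} ‖b‖^γ ≤ 2^{α-1} K^{γ-α} ‖b‖^α
    have key : 2 ^ (γ - 1) * ‖b‖ ^ γ ≤ 2 ^ (α - 1) * K ^ (γ - α) * ‖b‖ ^ α := by
      have hone : (1:ℝ) ≤ (2 * ‖b‖ / K) ^ (α - γ) := by
        apply Real.one_le_rpow _ (by linarith)
        rw [le_div_iff₀ hK]
        linarith
      have hexp : (2 * ‖b‖ / K) ^ (α - γ) = 2 ^ (α - γ) * ‖b‖ ^ (α - γ) * K ^ (γ - α) := by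
        rw [Real.div_rpow (by positivity) hK.le,
          Real.mul_rpow (by norm_num) hbnn, div_eq_mul_inv, ← Real.rpow_neg hK.le,
          neg_sub]
      have expand : 2 ^ (α - 1) * K ^ (γ - α) * ‖b‖ ^ α
          = (2 * ‖b‖ / K) ^ (α - γ) * (2 ^ (γ - 1) * ‖b‖ ^ γ) := by
        rw [hexp]
        rw [show (α:ℝ) - 1 = (α - γ) + (γ - 1) by ring,
          Real.rpow_add two_pos,
          show (α:ℝ) = (α - γ) + γ by ring,
          Real.rpow_add hb0]
        ring
      rw [expand]
      nlinarith [Real.rpow_nonneg (le_of_lt two_pos) (γ - 1),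
        Real.rpow_nonneg hbnn γ, mul_pos (Real.rpow_pos_of_pos two_pos (γ-1)) (Real.rpow_pos_of_pos hb0 γ)]
    have habpow : 0 ≤ ‖a - b‖ ^ γ := Real.rpow_nonneg habnn γ
    nlinarith
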